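/- (Concentration of regularized firm degrees.) In the degree-corrected stochastic block model, if M = max(M_w, M_f) ≤ 1 / (3 ln((n+p)/ε)) and t = √(3 M ln((n+p)/ε)) ≤ 1, then for every firm j, Pr{ | d_{·j} − θ_j C(·,ℓ_j) | / ( θ_j C(·,ℓ_j) + λ_f ) ≥ t } ≤ 2ε/(n+p); consequently Pr{ ‖I_p − D_{f,λ}^{1/2} 𝔇_{f,λ}^{-1/2}‖ ≥ 1 − √(1−t) } ≤ 2pε/(n+p) and Pr{ ‖D_{f,λ}^{1/2} 𝔇_{f,λ}^{-1/2}‖ ≥ √(1+t) } ≤ pε/(n+p). -/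

import Mathlib

open Matrix MeasureTheory ProbabilityTheory BigOperators

/-- Spectral (ℓ2 operator) norm of a real matrix. -/
noncomputable def specNorm {m n : ℕ} (A : Matrix (Fin m) (Fin n) ℝ) : ℝ :=
  ‖LinearMap.toContinuousLinearMap (Matrix.toEuclideanLin A)‖

/-- Euclidean norm of a vector in `ℝ^n`. -/
noncomputable def vecNorm {n : ℕ} (x : Fin n → ℝ) : ℝ :=
  Real.sqrt (∑ i, x i ^ 2)


lemma exp_taylor3 {x : ℝ} (hx : |x| ≤ 1) :
    Real.exp x ≤ 1 + x + x ^ 2 / 2 + (2 / 9) * |x| ^ 3 := by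
  have h := Real.exp_bound hx (n := 3) (by norm_num)
  have h2 : ∑ m ∈ Finset.range 3, x ^ m / m.factorial = 1 + x + x ^ 2 / 2 := by
    norm_num [Finset.sum_range_succ, Nat.factorial]
  rw [h2] at h
  have h5 := (abs_sub_le_iff.mp h).1
  have h4 : (0:ℝ) ≤ |x| ^ 3 := by positivity
  have h3 : |x| ^ 3 * (((3:ℕ).succ : ℝ) / ((3:ℕ).factorial * (3:ℕ))) ≤ (2/9) * |x| ^ 3 := by
    rw [mul_comm]
    apply mul_le_mul_of_nonneg_right _ h4
    norm_num [Nat.factorial]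
  linarith

lemma mgf_bernoulli {Ω : Type} [MeasurableSpace Ω] (P : Measure Ω) [IsProbabilityMeasure P]
    (X : Ω → ℝ) (v pr c : ℝ) (hv : v ≠ 0) (h01 : ∀ ω, X ω = 0 ∨ X ω = v)
    (hmeas : Measurable X) (hpr : 0 ≤ pr)
    (hber : P {ω | X ω = v} = ENNReal.ofReal pr) :
    ProbabilityTheory.mgf X P c = 1 + pr * (Real.exp (c * v) - 1) := by
  have hA : MeasurableSet {ω | X ω = v} := hmeas (measurableSet_singleton v)
  have hpt : ∀ ω, Real.exp (c * X ω) =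
      1 + (Real.exp (c * v) - 1) * Set.indicator {ω | X ω = v} (fun _ => (1:ℝ)) ω := by
    intro ω
    rcases h01 ω with h | h
    · rw [h]
      have : ω ∉ {ω | X ω = v} := by simp [h, Ne.symm hv]
      simp [Set.indicator_of_notMem this]
    · have : ω ∈ {ω | X ω = v} := h
      simp [Set.indicator_of_mem this, h]
  have hint : Integrable (Set.indicator {ω | X ω = v} (fun _ => (1:ℝ))) P :=
    (integrable_const (1:ℝ)).indicator hA
  rw [ProbabilityTheory.mgf]
  calc ∫ ω, Real.exp (c * X ω) ∂P
      = ∫ ω, (1 + (Real.exp (c * v) - 1) * Set.indicator {ω | X ω = v} (fun _ => (1:ℝ)) ω) ∂P := by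
        exact integral_congr_ae (Filter.Eventually.of_forall hpt)
    _ = 1 + pr * (Real.exp (c * v) - 1) := by
        rw [integral_add (integrable_const 1) (hint.const_mul _)]
        rw [integral_const, integral_const_mul, integral_indicator_const _ hA]
        simp [measureReal_def, hber, ENNReal.toReal_ofReal hpr]
        ring

lemma chernoff_core {Ω : Type} [MeasurableSpace Ω] (P : Measure Ω) [IsProbabilityMeasure P]
    {ι : Type} (s : Finset ι) (X : ι → Ω → ℝ) (pr : ι → ℝ) (v : ℝ) (hv : v ≠ 0)
    (h01 : ∀ i ω, X i ω = 0 ∨ X i ω = v)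
    (hmeas : ∀ i, Measurable (X i)) (hpr : ∀ i, 0 ≤ pr i)
    (hber : ∀ i, P {ω | X i ω = v} = ENNReal.ofReal (pr i))
    (hindep : iIndepFun X P)
    (c s0 : ℝ) (hc : 0 ≤ c) :
    P {ω | s0 ≤ ∑ i ∈ s, X i ω} ≤
      ENNReal.ofReal (Real.exp ((∑ i ∈ s, pr i) * (Real.exp (c * v) - 1) - c * s0)) := by
  classical
  set S : Ω → ℝ := ∑ i ∈ s, X i with hS
  have hSapp : ∀ ω, S ω = ∑ i ∈ s, X i ω := by
    intro ω; simp [hS, Finset.sum_apply]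
  have hSmeas : Measurable S := by
    rw [show S = fun ω => ∑ i ∈ s, X i ω from funext hSapp]
    exact Finset.measurable_sum s fun i _ => hmeas i
  have hbd : ∀ ω, ‖Real.exp (c * S ω)‖ ≤ Real.exp (s.card * |c * v|) := by
    intro ω
    rw [Real.norm_eq_abs, abs_of_pos (Real.exp_pos _), Real.exp_le_exp]
    rw [hSapp, Finset.mul_sum]
    calc ∑ i ∈ s, c * X i ω ≤ ∑ i ∈ s, |c * v| := by
          apply Finset.sum_le_sum
          intro i _
          rcases h01 i ω with h | h <;> rw [h]
          · rw [mul_zero]; positivity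
          · exact le_abs_self _
      _ = s.card * |c * v| := by rw [Finset.sum_const, nsmul_eq_mul]
  have hint : Integrable (fun ω => Real.exp (c * S ω)) P := by
    apply Integrable.mono' (integrable_const (Real.exp (s.card * |c * v|)))
    · exact ((hSmeas.const_mul c).exp).aestronglyMeasurable
    · exact Filter.Eventually.of_forall hbd
  have hcher := ProbabilityTheory.measure_ge_le_exp_mul_mgf (X := S) (μ := P) (t := c) s0 hc hint
  have hmgf : ProbabilityTheory.mgf S P c = ∏ i ∈ s, ProbabilityTheory.mgf (X i) P c :=
    hindep.mgf_sum hmeas s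
  have hprod : ∏ i ∈ s, ProbabilityTheory.mgf (X i) P c ≤
      Real.exp ((∑ i ∈ s, pr i) * (Real.exp (c * v) - 1)) := by
    rw [Finset.sum_mul, Real.exp_sum]
    apply Finset.prod_le_prod
    · exact fun i _ => ProbabilityTheory.mgf_nonneg
    · intro i _
      rw [mgf_bernoulli P (X i) v (pr i) c hv (h01 i) (hmeas i) (hpr i) (hber i)]
      have := Real.add_one_le_exp (pr i * (Real.exp (c * v) - 1))
      linarith
  have key : (P {ω | s0 ≤ S ω}).toReal ≤
      Real.exp ((∑ i ∈ s, pr i) * (Real.exp (c * v) - 1) - c * s0) := by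
    calc (P {ω | s0 ≤ S ω}).toReal ≤ Real.exp (-c * s0) * ProbabilityTheory.mgf S P c := hcher
      _ ≤ Real.exp (-c * s0) * Real.exp ((∑ i ∈ s, pr i) * (Real.exp (c * v) - 1)) := by
          apply mul_le_mul_of_nonneg_left _ (Real.exp_pos _).le
          rw [hmgf]; exact hprod
      _ = Real.exp ((∑ i ∈ s, pr i) * (Real.exp (c * v) - 1) - c * s0) := by
          rw [← Real.exp_add]; ring_nf
  have hne : P {ω | s0 ≤ S ω} ≠ ⊤ := measure_ne_top _ _
  have hfin : P {ω | s0 ≤ S ω} ≤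
      ENNReal.ofReal (Real.exp ((∑ i ∈ s, pr i) * (Real.exp (c * v) - 1) - c * s0)) := by
    rw [← ENNReal.ofReal_toReal hne]
    exact ENNReal.ofReal_le_ofReal key
  convert hfin using 2
  ext ω
  simp [hSapp]

lemma specNorm_diagonal_le {m : ℕ} (v : Fin m → ℝ) (Cb : ℝ) (hCb : 0 ≤ Cb)
    (h : ∀ j, |v j| ≤ Cb) : specNorm (Matrix.diagonal v) ≤ Cb := by
  rw [specNorm]
  apply ContinuousLinearMap.opNorm_le_bound _ hCb
  intro x
  have hx : ∀ y : EuclideanSpace ℝ (Fin m), ‖y‖ = Real.sqrt (∑ i, (y i) ^ 2) := by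
    intro y
    rw [EuclideanSpace.norm_eq]
    congr 1
    apply Finset.sum_congr rfl
    intro i _
    rw [Real.norm_eq_abs, sq_abs]
  have happ : ∀ i, (LinearMap.toContinuousLinearMap (Matrix.toEuclideanLin (Matrix.diagonal v)) x) i
      = v i * x i := by
    intro i
    show (Matrix.toEuclideanLin (Matrix.diagonal v) x) i = v i * x i
    rw [Matrix.toEuclideanLin_apply]
    simp [Matrix.mulVec_diagonal]
  rw [hx, hx]
  have hsum : ∑ i, ((LinearMap.toContinuousLinearMap (Matrix.toEuclideanLin (Matrix.diagonal v)) x) i) ^ 2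
      ≤ Cb ^ 2 * ∑ i, (x i) ^ 2 := by
    rw [Finset.mul_sum]
    apply Finset.sum_le_sum
    intro i _
    rw [happ i, mul_pow]
    apply mul_le_mul_of_nonneg_right _ (sq_nonneg _)
    calc (v i) ^ 2 = |v i| ^ 2 := (sq_abs _).symm
      _ ≤ Cb ^ 2 := by
          apply pow_le_pow_left₀ (abs_nonneg _) (h i)
  calc Real.sqrt (∑ i, ((LinearMap.toContinuousLinearMap (Matrix.toEuclideanLin (Matrix.diagonal v)) x) i) ^ 2)
      ≤ Real.sqrt (Cb ^ 2 * ∑ i, (x i) ^ 2) := Real.sqrt_le_sqrt hsum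
    _ = Cb * Real.sqrt (∑ i, (x i) ^ 2) := by
        rw [Real.sqrt_mul (sq_nonneg _), Real.sqrt_sq hCb]



lemma expo_arith {b t L : ℝ} (hbpos : 0 < b) (h0 : 0 ≤ t) (h1 : t ≤ 1) (hL : 0 < L)
    (h3L : 3 * L ≤ t ^ 2 * b) :
    b * ((2 * t / 3) ^ 2 / 2 + (2 / 9) * (2 * t / 3) ^ 3) - 2 * t / 3 * (t * b) ≤ -L := by
  have ht3 : t ^ 3 ≤ t ^ 2 := by nlinarith
  nlinarith [mul_le_mul_of_nonneg_left ht3 hbpos.le]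

lemma sqrt_sum_le_two {t : ℝ} (h0 : 0 ≤ t) (h1 : t ≤ 1) :
    Real.sqrt (1 + t) + Real.sqrt (1 - t) ≤ 2 := by
  have ha := Real.sq_sqrt (by linarith : (0:ℝ) ≤ 1 + t)
  have hb2 := Real.sq_sqrt (by linarith : (0:ℝ) ≤ 1 - t)
  nlinarith [Real.sqrt_nonneg (1 + t), Real.sqrt_nonneg (1 - t),
    sq_nonneg (Real.sqrt (1 + t) - Real.sqrt (1 - t)),
    sq_nonneg (Real.sqrt (1 + t) + Real.sqrt (1 - t) - 2)]

/-- Concentration of regularized firm degrees: under the Bernstein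
condition, for every firm `j`,
`Pr{ |d_{·j} − θ_j C(·,ℓ_j)|/(θ_j C(·,ℓ_j)+λ_f) ≥ t } ≤ 2ε/(n+p)`; consequently
`Pr{ ‖I_p − D_{f,λ}^{1/2}𝔇_{f,λ}^{-1/2}‖ ≥ 1 − √(1−t) } ≤ 2pε/(n+p)` and
`Pr{ ‖D_{f,λ}^{1/2}𝔇_{f,λ}^{-1/2}‖ ≥ √(1+t) } ≤ pε/(n+p)`. -/
theorem stmt_11
    (n p K : ℕ) (hn : 0 < n) (hp : 0 < p) (hK : 0 < K)
    (kw : Fin n → Fin K) (ll : Fin p → Fin K)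
    (nsize : Fin K → ℕ)
    (hnsize : ∀ a, nsize a = (Finset.univ.filter (fun i => kw i = a)).card)
    (hnpos : ∀ a, 0 < nsize a)
    (θ : Fin p → ℝ) (hθ : ∀ j, 0 < θ j)
    (hθsum : ∀ a, ∑ j ∈ Finset.univ.filter (fun j => ll j = a), θ j = 1)
    (C : Matrix (Fin K) (Fin K) ℝ) (hC : ∀ a b, 0 ≤ C a b)
    (Crow : Fin K → ℝ) (hCrow : ∀ a, Crow a = ∑ b, C a b)
    (Ccol : Fin K → ℝ) (hCcol : ∀ b, Ccol b = ∑ a, C a b)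
    (pq : Fin n → Fin p → ℝ)
    (hpq : ∀ i j, pq i j = θ j * C (kw i) (ll j) / (nsize (kw i) : ℝ))
    (hpq1 : ∀ i j, pq i j ≤ 1)
    {Ω : Type} [MeasurableSpace Ω] (P : Measure Ω) [IsProbabilityMeasure P]
    (d : Fin n → Fin p → Ω → ℝ)
    (hd01 : ∀ i j ω, d i j ω = 0 ∨ d i j ω = 1)
    (hdmeas : ∀ i j, Measurable (d i j))
    (hdber : ∀ i j, P {ω | d i j ω = 1} = ENNReal.ofReal (pq i j))
    (hindep : iIndepFun
      (fun (q : Fin n × Fin p) ω => d q.1 q.2 ω) P)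
    (lamw lamf : ℝ) (hlamw : 0 < lamw) (hlamf : 0 < lamf)
    (Bb : Matrix (Fin n) (Fin p) ℝ) (hBb : ∀ i j, Bb i j = pq i j)
    (Bm : Ω → Matrix (Fin n) (Fin p) ℝ) (hBm : ∀ ω i j, Bm ω i j = d i j ω)
    (drow : Ω → Fin n → ℝ) (hdrowd : ∀ ω i, drow ω i = ∑ j, d i j ω)
    (dcol : Ω → Fin p → ℝ) (hdcold : ∀ ω j, dcol ω j = ∑ i, d i j ω)
    (dlw duw dlf duf Mw Mf gam : ℝ)
    (hdlw : dlw = Finset.univ.inf' ⟨⟨0, hK⟩, Finset.mem_univ _⟩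
      (fun a => Crow a / (nsize a : ℝ)))
    (hduw : duw = Finset.univ.sup' ⟨⟨0, hK⟩, Finset.mem_univ _⟩
      (fun a => Crow a / (nsize a : ℝ)))
    (hdlf : dlf = Finset.univ.inf' ⟨⟨0, hp⟩, Finset.mem_univ _⟩
      (fun j => θ j * Ccol (ll j)))
    (hduf : duf = Finset.univ.sup' ⟨⟨0, hp⟩, Finset.mem_univ _⟩
      (fun j => θ j * Ccol (ll j)))
    (hMw : Mw = 1 / (dlw + lamw)) (hMf : Mf = 1 / (dlf + lamf))
    (hgam : gam = (p : ℝ) / n)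
    (ε : ℝ) (hε : 0 < ε) (hεnp : ε < n + p)
    (hM : max Mw Mf ≤ 1 / (3 * Real.log ((n + p : ℝ) / ε)))
    (t : ℝ) (ht : t = Real.sqrt (3 * max Mw Mf * Real.log ((n + p : ℝ) / ε)))
    (Dhalf : Ω → Matrix (Fin p) (Fin p) ℝ)
    (hDhalf : ∀ ω, Dhalf ω =
      Matrix.diagonal (fun j => Real.sqrt (dcol ω j + lamf)) *
        Matrix.diagonal (fun j => 1 / Real.sqrt (θ j * Ccol (ll j) + lamf))) :
    (∀ j, P {ω | t ≤ |dcol ω j - θ j * Ccol (ll j)| / (θ j * Ccol (ll j) + lamf)} ≤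
      ENNReal.ofReal (2 * ε / (n + p))) ∧
    P {ω | 1 - Real.sqrt (1 - t) ≤ specNorm (1 - Dhalf ω)} ≤
      ENNReal.ofReal (2 * p * ε / (n + p)) ∧
    P {ω | Real.sqrt (1 + t) ≤ specNorm (Dhalf ω)} ≤
      ENNReal.ofReal (p * ε / (n + p)) := by
  classical
  have hNpos : (0:ℝ) < (n:ℝ) + p := by positivity
  have hNe : (0:ℝ) < ((n + p : ℝ)) / ε := by positivity
  set L : ℝ := Real.log ((n + p : ℝ) / ε) with hLdef
  have hL : 0 < L := Real.log_pos ((one_lt_div hε).mpr hεnp)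
  have hexpL : Real.exp (-L) = ε / ((n:ℝ) + p) := by
    rw [hLdef, Real.exp_neg, Real.exp_log hNe, inv_div]
  have hCcol0 : ∀ b, 0 ≤ Ccol b := fun b => by
    rw [hCcol]; exact Finset.sum_nonneg fun a _ => hC a b
  have hmu0 : ∀ j, 0 ≤ θ j * Ccol (ll j) := fun j => mul_nonneg (hθ j).le (hCcol0 _)
  have hb : ∀ j : Fin p, 0 < θ j * Ccol (ll j) + lamf := fun j => by
    have := hmu0 j; linarith
  have hdlf0 : 0 ≤ dlf := by
    rw [hdlf]; exact Finset.le_inf' _ _ fun j _ => hmu0 j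
  have hdlfle : ∀ j, dlf ≤ θ j * Ccol (ll j) := fun j => by
    rw [hdlf]; exact Finset.inf'_le _ (Finset.mem_univ j)
  have hMfpos : 0 < Mf := by rw [hMf]; positivity
  have hMpos : 0 < max Mw Mf := lt_of_lt_of_le hMfpos (le_max_right _ _)
  have hMb : ∀ j, 1 ≤ max Mw Mf * (θ j * Ccol (ll j) + lamf) := by
    intro j
    have hd : 0 < dlf + lamf := by linarith
    have h1 : 1 ≤ Mf * (θ j * Ccol (ll j) + lamf) := by
      rw [hMf, div_mul_eq_mul_div, le_div_iff₀ hd, one_mul, one_mul]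
      have := hdlfle j; linarith
    calc (1:ℝ) ≤ Mf * (θ j * Ccol (ll j) + lamf) := h1
      _ ≤ max Mw Mf * (θ j * Ccol (ll j) + lamf) :=
        mul_le_mul_of_nonneg_right (le_max_right _ _) (hb j).le
  have ht0 : 0 ≤ t := ht ▸ Real.sqrt_nonneg _
  have h3ML : 0 ≤ 3 * max Mw Mf * L :=
    mul_nonneg (mul_nonneg (by norm_num) hMpos.le) hL.le
  have ht2 : t ^ 2 = 3 * max Mw Mf * L := by rw [ht, Real.sq_sqrt h3ML]
  have ht1 : t ≤ 1 := by
    rw [ht, show (1:ℝ) = Real.sqrt 1 from (Real.sqrt_one).symm]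
    apply Real.sqrt_le_sqrt
    have h3 : 0 < 3 * L := by linarith
    rw [le_div_iff₀ h3] at hM
    linarith
  have h3L : ∀ j, 3 * L ≤ t ^ 2 * (θ j * Ccol (ll j) + lamf) := by
    intro j
    rw [ht2]
    have h1 := mul_le_mul_of_nonneg_left (hMb j) (by positivity : (0:ℝ) ≤ 3 * L)
    linarith [h1]
  have hpq0 : ∀ i j, 0 ≤ pq i j := fun i j => by
    rw [hpq]
    exact div_nonneg (mul_nonneg (hθ j).le (hC _ _)) (Nat.cast_nonneg _)
  have hmusum : ∀ j, ∑ i, pq i j = θ j * Ccol (ll j) := by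
    intro j
    have hfib := Finset.sum_fiberwise (Finset.univ : Finset (Fin n)) kw (fun i => pq i j)
    rw [← hfib, hCcol, Finset.mul_sum]
    apply Finset.sum_congr rfl
    intro a _
    have hinner : ∀ i ∈ Finset.univ.filter (fun i => kw i = a),
        pq i j = θ j * C a (ll j) / (nsize a : ℝ) := by
      intro i hi
      have hka := (Finset.mem_filter.mp hi).2
      rw [hpq, hka]
    rw [Finset.sum_congr rfl hinner, Finset.sum_const, ← hnsize a, nsmul_eq_mul]
    have hnz : (nsize a : ℝ) ≠ 0 := Nat.cast_ne_zero.mpr (hnpos a).ne'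
    field_simp
  have hexpo : ∀ (j : Fin p) (v : ℝ), |v| = 1 →
      θ j * Ccol (ll j) * (Real.exp (2 * t / 3 * v) - 1 - 2 * t / 3 * v)
        - 2 * t / 3 * (t * (θ j * Ccol (ll j) + lamf)) ≤ -L := by
    intro j v hv
    have hcc0 : (0:ℝ) ≤ 2 * t / 3 := by linarith
    have habs : |2 * t / 3 * v| = 2 * t / 3 := by
      rw [abs_mul, hv, mul_one, abs_of_nonneg hcc0]
    have h1 := exp_taylor3 (x := 2 * t / 3 * v) (by rw [habs]; linarith)
    have hv2 : v ^ 2 = 1 := by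
      have h6 : |v| ^ 2 = 1 := by rw [hv]; norm_num
      rwa [sq_abs] at h6
    have hsq : (2 * t / 3 * v) ^ 2 = (2 * t / 3) ^ 2 := by
      rw [mul_pow, hv2, mul_one]
    rw [habs, hsq] at h1
    have h2 : Real.exp (2 * t / 3 * v) - 1 - 2 * t / 3 * v
        ≤ (2 * t / 3) ^ 2 / 2 + (2 / 9) * (2 * t / 3) ^ 3 := by linarith
    have h3 : θ j * Ccol (ll j) * (Real.exp (2 * t / 3 * v) - 1 - 2 * t / 3 * v)
        ≤ (θ j * Ccol (ll j) + lamf) * ((2 * t / 3) ^ 2 / 2 + (2 / 9) * (2 * t / 3) ^ 3) := by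
      calc θ j * Ccol (ll j) * (Real.exp (2 * t / 3 * v) - 1 - 2 * t / 3 * v)
          ≤ θ j * Ccol (ll j) * ((2 * t / 3) ^ 2 / 2 + (2 / 9) * (2 * t / 3) ^ 3) :=
            mul_le_mul_of_nonneg_left h2 (hmu0 j)
        _ ≤ (θ j * Ccol (ll j) + lamf) * ((2 * t / 3) ^ 2 / 2 + (2 / 9) * (2 * t / 3) ^ 3) := by
            have ha : (0:ℝ) ≤ 2 * t / 3 := by linarith
            have ha3 : (0:ℝ) ≤ (2 * t / 3) ^ 3 := pow_nonneg ha 3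
            have ha2 : (0:ℝ) ≤ (2 * t / 3) ^ 2 := sq_nonneg _
            apply mul_le_mul_of_nonneg_right (by linarith) (by linarith)
    have hgoal := expo_arith (hb j) ht0 ht1 hL (h3L j)
    linarith [h3, hgoal]
  have hfil : ∀ (f : Fin n → Fin p → ℝ) (j : Fin p),
      ∑ q ∈ Finset.univ.filter (fun q : Fin n × Fin p => q.2 = j), f q.1 q.2 = ∑ i, f i j := by
    intro f j
    rw [Finset.sum_filter, Fintype.sum_prod_type]
    apply Finset.sum_congr rfl
    intro i _
    simp
  have tail_up : ∀ j : Fin p,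
      P {ω | θ j * Ccol (ll j) + t * (θ j * Ccol (ll j) + lamf) ≤ ∑ i, d i j ω}
        ≤ ENNReal.ofReal (ε / ((n:ℝ) + p)) := by
    intro j
    have hcore := chernoff_core P (Finset.univ.filter (fun q : Fin n × Fin p => q.2 = j))
      (fun q ω => d q.1 q.2 ω) (fun q => pq q.1 q.2) 1 one_ne_zero
      (fun q ω => hd01 q.1 q.2 ω) (fun q => hdmeas q.1 q.2) (fun q => hpq0 q.1 q.2)
      (fun q => hdber q.1 q.2) hindep (2 * t / 3)
      (θ j * Ccol (ll j) + t * (θ j * Ccol (ll j) + lamf)) (by linarith)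
    rw [show {ω | θ j * Ccol (ll j) + t * (θ j * Ccol (ll j) + lamf)
          ≤ ∑ q ∈ Finset.univ.filter (fun q : Fin n × Fin p => q.2 = j), d q.1 q.2 ω}
        = {ω | θ j * Ccol (ll j) + t * (θ j * Ccol (ll j) + lamf) ≤ ∑ i, d i j ω} from by
      ext ω
      simp only [Set.mem_setOf_eq, hfil (fun a b => d a b ω) j]] at hcore
    refine hcore.trans (ENNReal.ofReal_le_ofReal ?_)
    rw [hfil pq j, hmusum j, ← hexpL, Real.exp_le_exp]
    have h := hexpo j 1 (by norm_num)
    ring_nf at h ⊢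
    linarith [h]
  have hd01n : ∀ (q : Fin n × Fin p) (ω : Ω), -(d q.1 q.2 ω) = 0 ∨ -(d q.1 q.2 ω) = -1 := by
    intro q ω; rcases hd01 q.1 q.2 ω with h | h <;> simp [h]
  have hbern : ∀ q : Fin n × Fin p,
      P {ω | -(d q.1 q.2 ω) = -1} = ENNReal.ofReal (pq q.1 q.2) := by
    intro q
    have hseq : {ω | -(d q.1 q.2 ω) = -1} = {ω | d q.1 q.2 ω = 1} := by
      ext ω
      simp only [Set.mem_setOf_eq]
      constructor <;> intro h <;> linarith
    rw [hseq]; exact hdber q.1 q.2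
  have hindepn : iIndepFun
      (fun (q : Fin n × Fin p) ω => -(d q.1 q.2 ω)) P :=
    hindep.comp (fun _ => fun x : ℝ => -x) (fun _ => measurable_neg)
  have tail_lo : ∀ j : Fin p,
      P {ω | t * (θ j * Ccol (ll j) + lamf) - θ j * Ccol (ll j) ≤ ∑ i, -(d i j ω)}
        ≤ ENNReal.ofReal (ε / ((n:ℝ) + p)) := by
    intro j
    have hcore := chernoff_core P (Finset.univ.filter (fun q : Fin n × Fin p => q.2 = j))
      (fun q ω => -(d q.1 q.2 ω)) (fun q => pq q.1 q.2) (-1) (by norm_num)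
      hd01n (fun q => (hdmeas q.1 q.2).neg) (fun q => hpq0 q.1 q.2)
      hbern hindepn (2 * t / 3)
      (t * (θ j * Ccol (ll j) + lamf) - θ j * Ccol (ll j)) (by linarith)
    rw [show {ω | t * (θ j * Ccol (ll j) + lamf) - θ j * Ccol (ll j)
          ≤ ∑ q ∈ Finset.univ.filter (fun q : Fin n × Fin p => q.2 = j), -(d q.1 q.2 ω)}
        = {ω | t * (θ j * Ccol (ll j) + lamf) - θ j * Ccol (ll j) ≤ ∑ i, -(d i j ω)} from by
      ext ω
      simp only [Set.mem_setOf_eq, hfil (fun a b => -(d a b ω)) j]] at hcore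
    refine hcore.trans (ENNReal.ofReal_le_ofReal ?_)
    rw [hfil pq j, hmusum j, ← hexpL, Real.exp_le_exp]
    have h := hexpo j (-1) (by norm_num)
    ring_nf at h ⊢
    linarith [h]
  have part1 : ∀ j : Fin p,
      P {ω | t ≤ |dcol ω j - θ j * Ccol (ll j)| / (θ j * Ccol (ll j) + lamf)}
        ≤ ENNReal.ofReal (2 * ε / ((n:ℝ) + p)) := by
    intro j
    have hsub : {ω | t ≤ |dcol ω j - θ j * Ccol (ll j)| / (θ j * Ccol (ll j) + lamf)} ⊆
        {ω | θ j * Ccol (ll j) + t * (θ j * Ccol (ll j) + lamf) ≤ ∑ i, d i j ω} ∪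
        {ω | t * (θ j * Ccol (ll j) + lamf) - θ j * Ccol (ll j) ≤ ∑ i, -(d i j ω)} := by
      intro ω hω
      simp only [Set.mem_setOf_eq] at hω
      rw [le_div_iff₀ (hb j)] at hω
      rcases le_abs.mp hω with h | h
      · left
        simp only [Set.mem_setOf_eq, ← hdcold ω j]
        linarith
      · right
        have hnegsum : ∑ i, -(d i j ω) = -(∑ i, d i j ω) := by simp
        simp only [Set.mem_setOf_eq, hnegsum, ← hdcold ω j]
        linarith
    calc P {ω | t ≤ |dcol ω j - θ j * Ccol (ll j)| / (θ j * Ccol (ll j) + lamf)}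
        ≤ P ({ω | θ j * Ccol (ll j) + t * (θ j * Ccol (ll j) + lamf) ≤ ∑ i, d i j ω} ∪
            {ω | t * (θ j * Ccol (ll j) + lamf) - θ j * Ccol (ll j) ≤ ∑ i, -(d i j ω)}) :=
          measure_mono hsub
      _ ≤ P {ω | θ j * Ccol (ll j) + t * (θ j * Ccol (ll j) + lamf) ≤ ∑ i, d i j ω} +
            P {ω | t * (θ j * Ccol (ll j) + lamf) - θ j * Ccol (ll j) ≤ ∑ i, -(d i j ω)} :=
          measure_union_le _ _
      _ ≤ ENNReal.ofReal (ε / ((n:ℝ) + p)) + ENNReal.ofReal (ε / ((n:ℝ) + p)) :=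
          add_le_add (tail_up j) (tail_lo j)
      _ = ENNReal.ofReal (2 * ε / ((n:ℝ) + p)) := by
          rw [← ENNReal.ofReal_add (by positivity) (by positivity)]
          congr 1; ring
  have hdcol0 : ∀ ω j, 0 ≤ dcol ω j := by
    intro ω j; rw [hdcold]
    apply Finset.sum_nonneg; intro i _
    rcases hd01 i j ω with h | h <;> rw [h] <;> norm_num
  have hDdiag : ∀ ω, Dhalf ω = Matrix.diagonal
      (fun j => Real.sqrt (dcol ω j + lamf) * (1 / Real.sqrt (θ j * Ccol (ll j) + lamf))) := by
    intro ω; rw [hDhalf, Matrix.diagonal_mul_diagonal]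
  have hratio : ∀ ω (j : Fin p),
      Real.sqrt (dcol ω j + lamf) * (1 / Real.sqrt (θ j * Ccol (ll j) + lamf))
        = Real.sqrt ((dcol ω j + lamf) / (θ j * Ccol (ll j) + lamf)) := by
    intro ω j
    have hx0 : (0:ℝ) ≤ dcol ω j + lamf := by linarith [hdcol0 ω j]
    rw [mul_one_div, Real.sqrt_div hx0]
  have hnu : ((Finset.univ : Finset (Fin p))).Nonempty := ⟨⟨0, hp⟩, Finset.mem_univ _⟩
  refine ⟨part1, ?_, ?_⟩
  · -- part 2
    have hsub2 : {ω | 1 - Real.sqrt (1 - t) ≤ specNorm (1 - Dhalf ω)} ⊆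
        ⋃ j, {ω | t ≤ |dcol ω j - θ j * Ccol (ll j)| / (θ j * Ccol (ll j) + lamf)} := by
      intro ω hω
      by_contra hcon
      simp only [Set.mem_iUnion, Set.mem_setOf_eq, not_exists, not_le] at hcon
      simp only [Set.mem_setOf_eq] at hω
      have hwlt : ∀ j : Fin p,
          |1 - Real.sqrt (dcol ω j + lamf) * (1 / Real.sqrt (θ j * Ccol (ll j) + lamf))|
            < 1 - Real.sqrt (1 - t) := by
        intro j
        have h := hcon j
        rw [div_lt_iff₀ (hb j)] at h
        have habs := abs_lt.mp h
        have hx0 : (0:ℝ) ≤ dcol ω j + lamf := by linarith [hdcol0 ω j]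
        rw [hratio ω j]
        have hr1 : 1 - t < (dcol ω j + lamf) / (θ j * Ccol (ll j) + lamf) := by
          rw [lt_div_iff₀ (hb j)]; linarith [habs.1]
        have hr2 : (dcol ω j + lamf) / (θ j * Ccol (ll j) + lamf) < 1 + t := by
          rw [div_lt_iff₀ (hb j)]; linarith [habs.2]
        have hst : Real.sqrt (1 - t)
            < Real.sqrt ((dcol ω j + lamf) / (θ j * Ccol (ll j) + lamf)) :=
          Real.sqrt_lt_sqrt (by linarith) hr1
        have hst2 : Real.sqrt ((dcol ω j + lamf) / (θ j * Ccol (ll j) + lamf))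
            < Real.sqrt (1 + t) :=
          Real.sqrt_lt_sqrt (div_nonneg hx0 (hb j).le) hr2
        have hsum2 := sqrt_sum_le_two ht0 ht1
        rw [abs_lt]
        constructor
        · linarith
        · linarith
      have hCb0 : 0 ≤ Finset.univ.sup' hnu (fun j =>
          |1 - Real.sqrt (dcol ω j + lamf) * (1 / Real.sqrt (θ j * Ccol (ll j) + lamf))|) :=
        le_trans (abs_nonneg _) (Finset.le_sup' (fun j => |1 - Real.sqrt (dcol ω j + lamf) * (1 / Real.sqrt (θ j * Ccol (ll j) + lamf))|) (Finset.mem_univ (⟨0, hp⟩ : Fin p)))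
      have hmat : (1 : Matrix (Fin p) (Fin p) ℝ) - Dhalf ω = Matrix.diagonal
          (fun j => 1 - Real.sqrt (dcol ω j + lamf) *
            (1 / Real.sqrt (θ j * Ccol (ll j) + lamf))) := by
        rw [hDdiag ω]
        ext i k
        by_cases hik : i = k
        · subst hik
          simp [Matrix.sub_apply, Matrix.diagonal_apply_eq, Matrix.one_apply_eq]
        · simp [Matrix.sub_apply, Matrix.diagonal_apply_ne _ hik, Matrix.one_apply_ne hik]
      have hspec : specNorm (1 - Dhalf ω) ≤ Finset.univ.sup' hnu (fun j =>
          |1 - Real.sqrt (dcol ω j + lamf) * (1 / Real.sqrt (θ j * Ccol (ll j) + lamf))|) := by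
        rw [hmat]
        exact specNorm_diagonal_le _ _ hCb0 (fun j => Finset.le_sup' (fun j => |1 - Real.sqrt (dcol ω j + lamf) * (1 / Real.sqrt (θ j * Ccol (ll j) + lamf))|) (Finset.mem_univ j))
      have hlt := (Finset.sup'_lt_iff hnu).mpr (fun j _ => hwlt j)
      linarith
    calc P {ω | 1 - Real.sqrt (1 - t) ≤ specNorm (1 - Dhalf ω)}
        ≤ P (⋃ j, {ω | t ≤ |dcol ω j - θ j * Ccol (ll j)| / (θ j * Ccol (ll j) + lamf)}) :=
          measure_mono hsub2
      _ ≤ ∑' j, P {ω | t ≤ |dcol ω j - θ j * Ccol (ll j)| / (θ j * Ccol (ll j) + lamf)} :=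
          measure_iUnion_le _
      _ = ∑ j, P {ω | t ≤ |dcol ω j - θ j * Ccol (ll j)| / (θ j * Ccol (ll j) + lamf)} :=
          tsum_fintype _
      _ ≤ ∑ _j : Fin p, ENNReal.ofReal (2 * ε / ((n:ℝ) + p)) :=
          Finset.sum_le_sum fun j _ => part1 j
      _ = (p : ENNReal) * ENNReal.ofReal (2 * ε / ((n:ℝ) + p)) := by
          rw [Finset.sum_const, Finset.card_univ, Fintype.card_fin, nsmul_eq_mul]
      _ = ENNReal.ofReal (2 * p * ε / ((n:ℝ) + p)) := by
          rw [← ENNReal.ofReal_natCast p, ← ENNReal.ofReal_mul (Nat.cast_nonneg p)]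
          congr 1; ring
  · -- part 3
    have hsub3 : {ω | Real.sqrt (1 + t) ≤ specNorm (Dhalf ω)} ⊆
        ⋃ j, {ω | θ j * Ccol (ll j) + t * (θ j * Ccol (ll j) + lamf) ≤ ∑ i, d i j ω} := by
      intro ω hω
      by_contra hcon
      simp only [Set.mem_iUnion, Set.mem_setOf_eq, not_exists, not_le] at hcon
      simp only [Set.mem_setOf_eq] at hω
      have hwlt : ∀ j : Fin p,
          |Real.sqrt (dcol ω j + lamf) * (1 / Real.sqrt (θ j * Ccol (ll j) + lamf))|
            < Real.sqrt (1 + t) := by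
        intro j
        have h := hcon j
        rw [← hdcold ω j] at h
        have hx0 : (0:ℝ) ≤ dcol ω j + lamf := by linarith [hdcol0 ω j]
        rw [hratio ω j, abs_of_nonneg (Real.sqrt_nonneg _)]
        apply Real.sqrt_lt_sqrt (div_nonneg hx0 (hb j).le)
        rw [div_lt_iff₀ (hb j)]
        linarith [h]
      have hCb0 : 0 ≤ Finset.univ.sup' hnu (fun j =>
          |Real.sqrt (dcol ω j + lamf) * (1 / Real.sqrt (θ j * Ccol (ll j) + lamf))|) :=
        le_trans (abs_nonneg _) (Finset.le_sup' (fun j => |Real.sqrt (dcol ω j + lamf) * (1 / Real.sqrt (θ j * Ccol (ll j) + lamf))|) (Finset.mem_univ (⟨0, hp⟩ : Fin p)))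
      have hspec : specNorm (Dhalf ω) ≤ Finset.univ.sup' hnu (fun j =>
          |Real.sqrt (dcol ω j + lamf) * (1 / Real.sqrt (θ j * Ccol (ll j) + lamf))|) := by
        rw [hDdiag ω]
        exact specNorm_diagonal_le _ _ hCb0 (fun j => Finset.le_sup' (fun j => |Real.sqrt (dcol ω j + lamf) * (1 / Real.sqrt (θ j * Ccol (ll j) + lamf))|) (Finset.mem_univ j))
      have hlt := (Finset.sup'_lt_iff hnu).mpr (fun j _ => hwlt j)
      linarith
    calc P {ω | Real.sqrt (1 + t) ≤ specNorm (Dhalf ω)}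
        ≤ P (⋃ j, {ω | θ j * Ccol (ll j) + t * (θ j * Ccol (ll j) + lamf) ≤ ∑ i, d i j ω}) :=
          measure_mono hsub3
      _ ≤ ∑' j, P {ω | θ j * Ccol (ll j) + t * (θ j * Ccol (ll j) + lamf) ≤ ∑ i, d i j ω} :=
          measure_iUnion_le _
      _ = ∑ j, P {ω | θ j * Ccol (ll j) + t * (θ j * Ccol (ll j) + lamf) ≤ ∑ i, d i j ω} :=
          tsum_fintype _
      _ ≤ ∑ _j : Fin p, ENNReal.ofReal (ε / ((n:ℝ) + p)) :=
          Finset.sum_le_sum fun j _ => tail_up j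
      _ = (p : ENNReal) * ENNReal.ofReal (ε / ((n:ℝ) + p)) := by
          rw [Finset.sum_const, Finset.card_univ, Fintype.card_fin, nsmul_eq_mul]
      _ = ENNReal.ofReal (p * ε / ((n:ℝ) + p)) := by
          rw [← ENNReal.ofReal_natCast p, ← ENNReal.ofReal_mul (Nat.cast_nonneg p)]
          congr 1; ring
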